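/- Let p be an odd prime and let W₁, W₂ ⊆ {0,…,p−1} be nonempty disjoint sets of horizontal block-layer indices. Let H⁽¹⁾ be the submatrix of H consisting of the rows ℓ with ⌊ℓ/p²⌋ ∈ W₁ and H⁽²⁾ the submatrix consisting of the rows ℓ with ⌊ℓ/p²⌋ ∈ W₂, both viewed over GF(2) = ZMod 2. Then the product H⁽¹⁾ · (H⁽²⁾)ᵀ over ZMod 2 is the all-ones matrix; in particular its rank equals 1, so the entanglement-assisted quantum LDPC code built from the pair (H⁽¹⁾, H⁽²⁾) requires exactly one ebit. -/

import Mathlib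

open Matrix

/-- The layer-by-layer unfolding of the 2-D QC-LDPC parity-check tensor: a binary matrix
with rows indexed by layers `ℓ ∈ {0,…,w·p²−1}` and columns indexed by positions
`(x, y)` with `x, y ∈ {0,…,p²−1}`; entry `(ℓ, (x, y))` equals `1` iff
`x ≡ ℓ + ζ_{⌊ℓ/p²⌋}(⌊ℓ/p⌋) + ⌊ℓ/p²⌋·(φ(⌊x/p⌋) + ψ(⌊y/p⌋)) (mod p)` and
`y ≡ ℓ + ⌊ℓ/p²⌋·φ(⌊x/p⌋) (mod p)`. -/
def Hmat (p w : ℕ) (φ ψ : ZMod p → ZMod p) (ζ : ℕ → ZMod p → ZMod p) :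
    Matrix (Fin (w * p ^ 2)) (Fin (p ^ 2) × Fin (p ^ 2)) (ZMod 2) :=
  fun ℓ xy =>
    if (((xy.1 : ℕ) : ZMod p) =
          ((ℓ : ℕ) : ZMod p) + ζ ((ℓ : ℕ) / p ^ 2) (((ℓ : ℕ) / p : ℕ) : ZMod p) +
            (((ℓ : ℕ) / p ^ 2 : ℕ) : ZMod p) *
              (φ (((xy.1 : ℕ) / p : ℕ) : ZMod p) + ψ (((xy.2 : ℕ) / p : ℕ) : ZMod p)) ∧
        ((xy.2 : ℕ) : ZMod p) =
          ((ℓ : ℕ) : ZMod p) +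
            (((ℓ : ℕ) / p ^ 2 : ℕ) : ZMod p) * φ (((xy.1 : ℕ) / p : ℕ) : ZMod p))
    then 1 else 0


/-- The overlap condition of a layer `ℓ` at position `xy`. -/
def Pcond (p : ℕ) (φ ψ : ZMod p → ZMod p) (ζ : ℕ → ZMod p → ZMod p) (ℓ : ℕ)
    (xy : Fin (p ^ 2) × Fin (p ^ 2)) : Prop :=
  ((xy.1 : ℕ) : ZMod p) =
      ((ℓ : ℕ) : ZMod p) + ζ ((ℓ : ℕ) / p ^ 2) (((ℓ : ℕ) / p : ℕ) : ZMod p) +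
        (((ℓ : ℕ) / p ^ 2 : ℕ) : ZMod p) *
          (φ (((xy.1 : ℕ) / p : ℕ) : ZMod p) + ψ (((xy.2 : ℕ) / p : ℕ) : ZMod p)) ∧
    ((xy.2 : ℕ) : ZMod p) =
      ((ℓ : ℕ) : ZMod p) +
        (((ℓ : ℕ) / p ^ 2 : ℕ) : ZMod p) * φ (((xy.1 : ℕ) / p : ℕ) : ZMod p)

instance Pcond.dec (p : ℕ) (φ ψ : ZMod p → ZMod p) (ζ : ℕ → ZMod p → ZMod p) (ℓ : ℕ)
    (xy : Fin (p ^ 2) × Fin (p ^ 2)) : Decidable (Pcond p φ ψ ζ ℓ xy) := by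
  unfold Pcond; infer_instance

lemma Hmat_eq (p w : ℕ) (φ ψ : ZMod p → ZMod p) (ζ : ℕ → ZMod p → ZMod p)
    (ℓ : Fin (w * p ^ 2)) (xy : Fin (p ^ 2) × Fin (p ^ 2)) :
    Hmat p w φ ψ ζ ℓ xy = if Pcond p φ ψ ζ (ℓ : ℕ) xy then 1 else 0 := by
  unfold Hmat Pcond
  split_ifs with h1
  · exact (if_pos h1).symm
  · exact (if_neg h1).symm

section Key
variable (p : ℕ) [hpf : Fact p.Prime]

lemma exists_unique_overlap (φ ψ : ZMod p → ZMod p)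
    (hφ : Function.Bijective φ) (hψ : Function.Bijective ψ) (ζ : ℕ → ZMod p → ZMod p)
    (ℓ₁ ℓ₂ : ℕ)
    (hne : ((ℓ₁ / p ^ 2 : ℕ) : ZMod p) ≠ ((ℓ₂ / p ^ 2 : ℕ) : ZMod p)) :
    ∃! xy : Fin (p ^ 2) × Fin (p ^ 2), Pcond p φ ψ ζ ℓ₁ xy ∧ Pcond p φ ψ ζ ℓ₂ xy := by
  have hp0 : 0 < p := hpf.out.pos
  set L₁ : ZMod p := ((ℓ₁ : ℕ) : ZMod p) with hL₁
  set L₂ : ZMod p := ((ℓ₂ : ℕ) : ZMod p) with hL₂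
  set Z₁ : ZMod p := ζ (ℓ₁ / p ^ 2) ((ℓ₁ / p : ℕ) : ZMod p) with hZ₁
  set Z₂ : ZMod p := ζ (ℓ₂ / p ^ 2) ((ℓ₂ / p : ℕ) : ZMod p) with hZ₂
  set M₁ : ZMod p := ((ℓ₁ / p ^ 2 : ℕ) : ZMod p) with hM₁
  set M₂ : ZMod p := ((ℓ₂ / p ^ 2 : ℕ) : ZMod p) with hM₂
  have hd : M₁ - M₂ ≠ 0 := sub_ne_zero.2 hne
  set d : ZMod p := M₁ - M₂ with hdd
  set Aval : ZMod p := (L₂ - L₁) * d⁻¹ with hAval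
  set Sval : ZMod p := (L₂ + Z₂ - L₁ - Z₁) * d⁻¹ with hSval
  have hdA : d * Aval = L₂ - L₁ := by
    rw [hAval, mul_comm d, inv_mul_cancel_right₀ hd]
  have hdS : d * Sval = L₂ + Z₂ - L₁ - Z₁ := by
    rw [hSval, mul_comm d, inv_mul_cancel_right₀ hd]
  set eφ := Equiv.ofBijective φ hφ with heφ
  set eψ := Equiv.ofBijective ψ hψ with heψ
  set a : ZMod p := eφ.symm Aval with ha
  set b : ZMod p := eψ.symm (Sval - Aval) with hb
  have hφa : φ a = Aval := eφ.apply_symm_apply Aval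
  have hψb : ψ b = Sval - Aval := eψ.apply_symm_apply (Sval - Aval)
  set X : ZMod p := L₁ + Z₁ + M₁ * Sval with hX
  set Y : ZMod p := L₁ + M₁ * Aval with hY
  have hbound : ∀ u v : ZMod p, p * u.val + v.val < p ^ 2 := by
    intro u v
    have h1 := u.val_lt
    have h2 := v.val_lt
    rw [pow_two]
    nlinarith
  set x0 : Fin (p ^ 2) := ⟨p * a.val + X.val, hbound a X⟩ with hx0
  set y0 : Fin (p ^ 2) := ⟨p * b.val + Y.val, hbound b Y⟩ with hy0
  have hdivmod : ∀ (u v : ZMod p), (p * u.val + v.val) / p = u.val ∧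
      (((p * u.val + v.val : ℕ) : ZMod p)) = v := by
    intro u v
    constructor
    · rw [Nat.mul_add_div hp0, Nat.div_eq_of_lt v.val_lt, add_zero]
    · push_cast
      simp [ZMod.natCast_self, ZMod.natCast_val, ZMod.cast_id]
  have hxdiv : ((x0 : ℕ)) / p = a.val := (hdivmod a X).1
  have hxcast : (((x0 : ℕ)) : ZMod p) = X := (hdivmod a X).2
  have hydiv : ((y0 : ℕ)) / p = b.val := (hdivmod b Y).1
  have hycast : (((y0 : ℕ)) : ZMod p) = Y := (hdivmod b Y).2
  have hvala : ((a.val : ℕ) : ZMod p) = a := by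
    simp [ZMod.natCast_val, ZMod.cast_id]
  have hvalb : ((b.val : ℕ) : ZMod p) = b := by
    simp [ZMod.natCast_val, ZMod.cast_id]
  refine ⟨(x0, y0), ⟨⟨?_, ?_⟩, ⟨?_, ?_⟩⟩, ?_⟩
  · show (((x0 : ℕ)) : ZMod p) = L₁ + Z₁ + M₁ * (φ _ + ψ _)
    rw [hxcast, hxdiv, hydiv, hvala, hvalb, hφa, hψb]
    rw [hX]; ring
  · show (((y0 : ℕ)) : ZMod p) = L₁ + M₁ * φ _
    rw [hycast, hxdiv, hvala, hφa, hY]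
  · show (((x0 : ℕ)) : ZMod p) = L₂ + Z₂ + M₂ * (φ _ + ψ _)
    rw [hxcast, hxdiv, hydiv, hvala, hvalb, hφa, hψb, hX]
    have : Aval + (Sval - Aval) = Sval := by ring
    rw [this]
    linear_combination hdS
  · show (((y0 : ℕ)) : ZMod p) = L₂ + M₂ * φ _
    rw [hycast, hxdiv, hvala, hφa, hY]
    linear_combination hdA
  · rintro ⟨x, y⟩ ⟨⟨h11, h12⟩, ⟨h21, h22⟩⟩
    -- notation
    set F : ZMod p := φ (((x : ℕ) / p : ℕ) : ZMod p) with hF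
    set G : ZMod p := ψ (((y : ℕ) / p : ℕ) : ZMod p) with hG
    have hdF : d * F = L₂ - L₁ := by linear_combination h22 - h12
    have hFA : F = Aval := by
      rw [hAval, eq_mul_inv_iff_mul_eq₀ hd, mul_comm]; exact hdF
    have hdFG : d * (F + G) = L₂ + Z₂ - L₁ - Z₁ := by linear_combination h21 - h11
    have hGS : F + G = Sval := by
      rw [hSval, eq_mul_inv_iff_mul_eq₀ hd, mul_comm]; exact hdFG
    have hGB : G = Sval - Aval := by rw [← hFA, ← hGS]; ring
    -- div parts
    have hxplt : (x : ℕ) / p < p := by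
      rw [Nat.div_lt_iff_lt_mul hp0, ← pow_two]; exact x.isLt
    have hyplt : (y : ℕ) / p < p := by
      rw [Nat.div_lt_iff_lt_mul hp0, ← pow_two]; exact y.isLt
    have hxa : (((x : ℕ) / p : ℕ) : ZMod p) = a := by
      apply eφ.injective
      show φ _ = φ a
      rw [hφa, ← hF, hFA]
    have hyb : (((y : ℕ) / p : ℕ) : ZMod p) = b := by
      apply eψ.injective
      show ψ _ = ψ b
      rw [hψb, ← hG, hGB]
    have hxa' : (x : ℕ) / p = a.val := by
      have := congrArg ZMod.val hxa
      rwa [ZMod.val_natCast, Nat.mod_eq_of_lt hxplt] at this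
    have hyb' : (y : ℕ) / p = b.val := by
      have := congrArg ZMod.val hyb
      rwa [ZMod.val_natCast, Nat.mod_eq_of_lt hyplt] at this
    -- mod parts
    have hxX : (((x : ℕ)) : ZMod p) = X := by
      rw [h11, hGS]
    have hyY : (((y : ℕ)) : ZMod p) = Y := by
      rw [h12, hFA]
    have hxm : (x : ℕ) % p = X.val := by
      have := congrArg ZMod.val hxX
      rwa [ZMod.val_natCast] at this
    have hym : (y : ℕ) % p = Y.val := by
      have := congrArg ZMod.val hyY
      rwa [ZMod.val_natCast] at this
    have hxeq : (x : ℕ) = p * a.val + X.val := by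
      conv_lhs => rw [← Nat.div_add_mod (x : ℕ) p]
      rw [hxa', hxm]
    have hyeq : (y : ℕ) = p * b.val + Y.val := by
      conv_lhs => rw [← Nat.div_add_mod (y : ℕ) p]
      rw [hyb', hym]
    exact Prod.ext (Fin.ext hxeq) (Fin.ext hyeq)

end Key


/-- Key computation in Theorem 6 (first family of 2-D EA quantum LDPC codes): for
nonempty disjoint sets `W₁, W₂` of horizontal block-layer indices, the product
`H⁽¹⁾ · (H⁽²⁾)ᵀ` over GF(2) of the corresponding row-submatrices of `H` is the
all-ones matrix, and its rank equals `1`; hence a single ebit suffices. -/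
theorem stmt_14 (p : ℕ) (hp : p.Prime) (hodd : Odd p)
    (φ ψ : ZMod p → ZMod p) (hφ : Function.Bijective φ) (hψ : Function.Bijective ψ)
    (ζ : ℕ → ZMod p → ZMod p) (hζ : ∀ m < p, Function.Bijective (ζ m))
    (W₁ W₂ : Finset ℕ) (hW₁ : W₁.Nonempty) (hW₂ : W₂.Nonempty)
    (hW₁p : ∀ m ∈ W₁, m < p) (hW₂p : ∀ m ∈ W₂, m < p)
    (hdisj : Disjoint W₁ W₂) :
    (Matrix.of (fun (ℓ₁ : {ℓ : Fin (p * p ^ 2) // (ℓ : ℕ) / p ^ 2 ∈ W₁})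
          (xy : Fin (p ^ 2) × Fin (p ^ 2)) => Hmat p p φ ψ ζ ℓ₁.1 xy) *
        (Matrix.of (fun (ℓ₂ : {ℓ : Fin (p * p ^ 2) // (ℓ : ℕ) / p ^ 2 ∈ W₂})
          (xy : Fin (p ^ 2) × Fin (p ^ 2)) => Hmat p p φ ψ ζ ℓ₂.1 xy))ᵀ =
      Matrix.of fun _ _ => (1 : ZMod 2)) ∧
    (Matrix.of (fun (ℓ₁ : {ℓ : Fin (p * p ^ 2) // (ℓ : ℕ) / p ^ 2 ∈ W₁})
          (xy : Fin (p ^ 2) × Fin (p ^ 2)) => Hmat p p φ ψ ζ ℓ₁.1 xy) *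
        (Matrix.of (fun (ℓ₂ : {ℓ : Fin (p * p ^ 2) // (ℓ : ℕ) / p ^ 2 ∈ W₂})
          (xy : Fin (p ^ 2) × Fin (p ^ 2)) => Hmat p p φ ψ ζ ℓ₂.1 xy))ᵀ).rank = 1 := by
  haveI : Fact p.Prime := ⟨hp⟩
  have hp0 : 0 < p := hp.pos
  have hpsq : 0 < p ^ 2 := pow_pos hp0 2
  have hmain : (Matrix.of (fun (ℓ₁ : {ℓ : Fin (p * p ^ 2) // (ℓ : ℕ) / p ^ 2 ∈ W₁})
          (xy : Fin (p ^ 2) × Fin (p ^ 2)) => Hmat p p φ ψ ζ ℓ₁.1 xy) *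
        (Matrix.of (fun (ℓ₂ : {ℓ : Fin (p * p ^ 2) // (ℓ : ℕ) / p ^ 2 ∈ W₂})
          (xy : Fin (p ^ 2) × Fin (p ^ 2)) => Hmat p p φ ψ ζ ℓ₂.1 xy))ᵀ =
      Matrix.of fun _ _ => (1 : ZMod 2)) := by
    ext ℓ₁ ℓ₂
    simp only [Matrix.mul_apply, Matrix.transpose_apply, Matrix.of_apply]
    have hne : ((((ℓ₁.1 : ℕ)) / p ^ 2 : ℕ) : ZMod p) ≠ ((((ℓ₂.1 : ℕ)) / p ^ 2 : ℕ) : ZMod p) := by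
      intro h
      have h1 : ((ℓ₁.1 : ℕ)) / p ^ 2 < p := by
        rw [Nat.div_lt_iff_lt_mul hpsq]; exact ℓ₁.1.isLt
      have h2 : ((ℓ₂.1 : ℕ)) / p ^ 2 < p := by
        rw [Nat.div_lt_iff_lt_mul hpsq]; exact ℓ₂.1.isLt
      have := congrArg ZMod.val h
      rw [ZMod.val_natCast, ZMod.val_natCast, Nat.mod_eq_of_lt h1, Nat.mod_eq_of_lt h2] at this
      exact Finset.disjoint_left.mp hdisj ℓ₁.2 (this ▸ ℓ₂.2)
    obtain ⟨xy0, hxy0, huniq⟩ := exists_unique_overlap p φ ψ hφ hψ ζ ℓ₁.1 ℓ₂.1 hne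
    rw [Finset.sum_eq_single xy0]
    · rw [Hmat_eq, Hmat_eq, if_pos hxy0.1, if_pos hxy0.2, mul_one]
    · intro b _ hb
      have hnb : ¬(Pcond p φ ψ ζ (ℓ₁.1 : ℕ) b ∧ Pcond p φ ψ ζ (ℓ₂.1 : ℕ) b) :=
        fun h => hb (huniq b h)
      rw [Hmat_eq, Hmat_eq]
      split_ifs with u v <;> simp_all
    · intro h; exact absurd (Finset.mem_univ xy0) h
  refine ⟨hmain, ?_⟩
  rw [hmain]
  -- nonemptiness of the index types
  obtain ⟨m₁, hm₁⟩ := hW₁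
  obtain ⟨m₂, hm₂⟩ := hW₂
  have hI₁ : {ℓ : Fin (p * p ^ 2) // (ℓ : ℕ) / p ^ 2 ∈ W₁} :=
    ⟨⟨m₁ * p ^ 2, by exact (Nat.mul_lt_mul_right hpsq).2 (hW₁p m₁ hm₁)⟩, by
      simp [Nat.mul_div_cancel _ hpsq, hm₁]⟩
  have hI₂ : {ℓ : Fin (p * p ^ 2) // (ℓ : ℕ) / p ^ 2 ∈ W₂} :=
    ⟨⟨m₂ * p ^ 2, by exact (Nat.mul_lt_mul_right hpsq).2 (hW₂p m₂ hm₂)⟩, by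
      simp [Nat.mul_div_cancel _ hpsq, hm₂]⟩
  apply le_antisymm
  · -- rank ≤ 1
    have hfac : (Matrix.of fun (_ : {ℓ : Fin (p * p ^ 2) // (ℓ : ℕ) / p ^ 2 ∈ W₁})
          (_ : {ℓ : Fin (p * p ^ 2) // (ℓ : ℕ) / p ^ 2 ∈ W₂}) => (1 : ZMod 2)) =
        (Matrix.of fun (_ : {ℓ : Fin (p * p ^ 2) // (ℓ : ℕ) / p ^ 2 ∈ W₁}) (_ : Unit) =>
          (1 : ZMod 2)) *
        (Matrix.of fun (_ : Unit) (_ : {ℓ : Fin (p * p ^ 2) // (ℓ : ℕ) / p ^ 2 ∈ W₂}) =>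
          (1 : ZMod 2)) := by
      ext i j
      simp [Matrix.mul_apply]
    rw [hfac]
    calc ((Matrix.of fun (_ : {ℓ : Fin (p * p ^ 2) // (ℓ : ℕ) / p ^ 2 ∈ W₁}) (_ : Unit) =>
          (1 : ZMod 2)) *
        (Matrix.of fun (_ : Unit) (_ : {ℓ : Fin (p * p ^ 2) // (ℓ : ℕ) / p ^ 2 ∈ W₂}) =>
          (1 : ZMod 2))).rank ≤ (Matrix.of fun (_ : {ℓ : Fin (p * p ^ 2) // (ℓ : ℕ) / p ^ 2 ∈ W₁})
          (_ : Unit) => (1 : ZMod 2)).rank := Matrix.rank_mul_le_left _ _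
      _ ≤ Fintype.card Unit := Matrix.rank_le_card_width _
      _ = 1 := Fintype.card_unit
  · -- 1 ≤ rank
    rw [Nat.one_le_iff_ne_zero]
    intro h0
    rw [Matrix.rank] at h0
    rw [Submodule.finrank_eq_zero] at h0
    have hmem : ((Matrix.of fun (_ : {ℓ : Fin (p * p ^ 2) // (ℓ : ℕ) / p ^ 2 ∈ W₁})
          (_ : {ℓ : Fin (p * p ^ 2) // (ℓ : ℕ) / p ^ 2 ∈ W₂}) => (1 : ZMod 2)).mulVecLin
            (Pi.single hI₂ 1)) ∈ (⊥ : Submodule (ZMod 2) _) := by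
      rw [← h0]; exact LinearMap.mem_range_self _ _
    rw [Submodule.mem_bot] at hmem
    have := congrFun hmem hI₁
    simp [Matrix.mulVecLin_apply, Matrix.mulVec_single] at this
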